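/- Let K₁ ∈ B(H₁), K₂ ∈ B(H₂), let F₁ : Ω → H₁ be a continuous K₁-frame with bounds 0 < A₁ ≤ B₁ and F₂ : Ω → H₂ a continuous K₂-frame with bounds 0 < A₂ ≤ B₂, with transform operators θ₁, θ₂. If range θ₁ ⊥ range θ₂ in L²(Ω, 𝕜) (i.e. ⟪θ₁ u, θ₂ v⟫_{L²} = 0 for all u ∈ H₁, v ∈ H₂), then F₁ ⊕ F₂ is a continuous (K₁ ⊕ K₂)-frame for H₁ ⊕ H₂: for all (u, v) ∈ H₁ ⊕ H₂, min(A₁, A₂)·‖(K₁ ⊕ K₂)* (u, v)‖² ≤ ∫_Ω |⟪(F₁ ω, F₂ ω), (u, v)⟫|² dμ(ω) ≤ max(B₁, B₂)·‖(u, v)‖². -/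

import Mathlib

open MeasureTheory ContinuousLinearMap

/-- The direct sum operator `K₁ ⊕ K₂` on the super Hilbert space `H₁ ⊕ H₂`, mapping
`(u, v)` to `(K₁ u, K₂ v)`. -/
noncomputable def prodOp {𝕜 : Type*} [RCLike 𝕜]
    {H₁ : Type*} [NormedAddCommGroup H₁] [InnerProductSpace 𝕜 H₁]
    {H₂ : Type*} [NormedAddCommGroup H₂] [InnerProductSpace 𝕜 H₂]
    (K₁ : H₁ →L[𝕜] H₁) (K₂ : H₂ →L[𝕜] H₂) :
    WithLp 2 (H₁ × H₂) →L[𝕜] WithLp 2 (H₁ × H₂) :=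
  ((WithLp.prodContinuousLinearEquiv 2 𝕜 H₁ H₂).symm.toContinuousLinearMap).comp
    ((K₁.prodMap K₂).comp (WithLp.prodContinuousLinearEquiv 2 𝕜 H₁ H₂).toContinuousLinearMap)

lemma prodOp_apply_fst {𝕜 : Type*} [RCLike 𝕜]
    {H₁ : Type*} [NormedAddCommGroup H₁] [InnerProductSpace 𝕜 H₁]
    {H₂ : Type*} [NormedAddCommGroup H₂] [InnerProductSpace 𝕜 H₂]
    (K₁ : H₁ →L[𝕜] H₁) (K₂ : H₂ →L[𝕜] H₂) (x : WithLp 2 (H₁ × H₂)) :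
    (prodOp K₁ K₂ x).fst = K₁ x.fst := rfl

lemma prodOp_apply_snd {𝕜 : Type*} [RCLike 𝕜]
    {H₁ : Type*} [NormedAddCommGroup H₁] [InnerProductSpace 𝕜 H₁]
    {H₂ : Type*} [NormedAddCommGroup H₂] [InnerProductSpace 𝕜 H₂]
    (K₁ : H₁ →L[𝕜] H₁) (K₂ : H₂ →L[𝕜] H₂) (x : WithLp 2 (H₁ × H₂)) :
    (prodOp K₁ K₂ x).snd = K₂ x.snd := rfl

lemma adjoint_prodOp {𝕜 : Type*} [RCLike 𝕜]
    {H₁ : Type*} [NormedAddCommGroup H₁] [InnerProductSpace 𝕜 H₁] [CompleteSpace H₁]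
    {H₂ : Type*} [NormedAddCommGroup H₂] [InnerProductSpace 𝕜 H₂] [CompleteSpace H₂]
    (K₁ : H₁ →L[𝕜] H₁) (K₂ : H₂ →L[𝕜] H₂) :
    ContinuousLinearMap.adjoint (prodOp K₁ K₂) =
      prodOp (ContinuousLinearMap.adjoint K₁) (ContinuousLinearMap.adjoint K₂) := by
  symm
  rw [ContinuousLinearMap.eq_adjoint_iff]
  intro x y
  rw [WithLp.prod_inner_apply, WithLp.prod_inner_apply]
  show inner 𝕜 (adjoint K₁ x.fst) y.fst + inner 𝕜 (adjoint K₂ x.snd) y.snd =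
    inner 𝕜 x.fst (K₁ y.fst) + inner 𝕜 x.snd (K₂ y.snd)
  rw [ContinuousLinearMap.adjoint_inner_left, ContinuousLinearMap.adjoint_inner_left]

/-- The `L²` norm squared of an `Lp` element equals the integral of the pointwise squared
norm of any a.e. representative. -/
lemma integral_norm_sq_eq {𝕜 : Type*} [RCLike 𝕜]
    {Ω : Type*} [MeasurableSpace Ω] {μ : Measure Ω}
    (f : Lp 𝕜 2 μ) (g : Ω → 𝕜) (hg : (f : Ω → 𝕜) =ᵐ[μ] g) :
    ∫ ω, ‖g ω‖ ^ 2 ∂μ = ‖f‖ ^ 2 := by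
  have h1 : ‖f‖ ^ 2 = RCLike.re (inner 𝕜 f f : 𝕜) := (inner_self_eq_norm_sq (𝕜 := 𝕜) f).symm
  rw [h1, MeasureTheory.L2.inner_def]
  rw [← integral_re (MeasureTheory.L2.integrable_inner f f)]
  refine integral_congr_ae ?_
  filter_upwards [hg] with ω hω
  rw [← hω]
  simp [inner_self_eq_norm_sq, RCLike.norm_sq_eq_def]

/-- If `F₁` is a continuous `K₁`-frame with bounds `0 < A₁ ≤ B₁`, `F₂` a continuous
`K₂`-frame with bounds `0 < A₂ ≤ B₂`, with transform operators `θ₁, θ₂`, and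
`range θ₁ ⊥ range θ₂` in `L²(Ω, 𝕜)`, then `F₁ ⊕ F₂` is a continuous `(K₁ ⊕ K₂)`-frame
for `H₁ ⊕ H₂` with bounds `min A₁ A₂` and `max B₁ B₂`. -/
theorem prod_K_frame_of_orthogonal_ranges
    {𝕜 : Type*} [RCLike 𝕜] [MeasurableSpace 𝕜] [BorelSpace 𝕜]
    {H₁ : Type*} [NormedAddCommGroup H₁] [InnerProductSpace 𝕜 H₁] [CompleteSpace H₁]
    {H₂ : Type*} [NormedAddCommGroup H₂] [InnerProductSpace 𝕜 H₂] [CompleteSpace H₂]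
    {Ω : Type*} [MeasurableSpace Ω] {μ : Measure Ω}
    (K₁ : H₁ →L[𝕜] H₁) (K₂ : H₂ →L[𝕜] H₂)
    (F₁ : Ω → H₁) (F₂ : Ω → H₂)
    (A₁ B₁ A₂ B₂ : ℝ) (hA₁ : 0 < A₁) (hA₁B₁ : A₁ ≤ B₁) (hA₂ : 0 < A₂) (hA₂B₂ : A₂ ≤ B₂)
    (hmeas₁ : ∀ u : H₁, Measurable fun ω => (inner 𝕜 (F₁ ω) u : 𝕜))
    (hframe₁ : ∀ u : H₁,
      A₁ * ‖ContinuousLinearMap.adjoint K₁ u‖ ^ 2 ≤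
        ∫ ω, ‖(inner 𝕜 (F₁ ω) u : 𝕜)‖ ^ 2 ∂μ ∧
      ∫ ω, ‖(inner 𝕜 (F₁ ω) u : 𝕜)‖ ^ 2 ∂μ ≤ B₁ * ‖u‖ ^ 2)
    (hmeas₂ : ∀ v : H₂, Measurable fun ω => (inner 𝕜 (F₂ ω) v : 𝕜))
    (hframe₂ : ∀ v : H₂,
      A₂ * ‖ContinuousLinearMap.adjoint K₂ v‖ ^ 2 ≤
        ∫ ω, ‖(inner 𝕜 (F₂ ω) v : 𝕜)‖ ^ 2 ∂μ ∧
      ∫ ω, ‖(inner 𝕜 (F₂ ω) v : 𝕜)‖ ^ 2 ∂μ ≤ B₂ * ‖v‖ ^ 2)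
    (θ₁ : H₁ →L[𝕜] Lp 𝕜 2 μ)
    (hθ₁ : ∀ u : H₁, (θ₁ u : Ω → 𝕜) =ᵐ[μ] fun ω => (inner 𝕜 (F₁ ω) u : 𝕜))
    (θ₂ : H₂ →L[𝕜] Lp 𝕜 2 μ)
    (hθ₂ : ∀ v : H₂, (θ₂ v : Ω → 𝕜) =ᵐ[μ] fun ω => (inner 𝕜 (F₂ ω) v : 𝕜))
    (hperp : ∀ (u : H₁) (v : H₂), (inner 𝕜 (θ₁ u) (θ₂ v) : 𝕜) = 0) :
    ∀ x : WithLp 2 (H₁ × H₂),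
      min A₁ A₂ * ‖ContinuousLinearMap.adjoint (prodOp K₁ K₂) x‖ ^ 2 ≤
        ∫ ω, ‖(inner 𝕜 ((WithLp.equiv 2 (H₁ × H₂)).symm (F₁ ω, F₂ ω)) x : 𝕜)‖ ^ 2 ∂μ ∧
      ∫ ω, ‖(inner 𝕜 ((WithLp.equiv 2 (H₁ × H₂)).symm (F₁ ω, F₂ ω)) x : 𝕜)‖ ^ 2 ∂μ ≤
        max B₁ B₂ * ‖x‖ ^ 2 := by
  intro x
  set u := x.fst
  set v := x.snd
  -- the combined frame coefficient function
  have hinner : ∀ ω, (inner 𝕜 ((WithLp.equiv 2 (H₁ × H₂)).symm (F₁ ω, F₂ ω)) x : 𝕜) =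
      (inner 𝕜 (F₁ ω) u : 𝕜) + (inner 𝕜 (F₂ ω) v : 𝕜) := by
    intro ω
    rw [WithLp.prod_inner_apply]
    rfl
  -- θ₁ u + θ₂ v represents the combined coefficients
  have hsum : ((θ₁ u + θ₂ v : Lp 𝕜 2 μ) : Ω → 𝕜) =ᵐ[μ]
      fun ω => (inner 𝕜 ((WithLp.equiv 2 (H₁ × H₂)).symm (F₁ ω, F₂ ω)) x : 𝕜) := by
    filter_upwards [Lp.coeFn_add (θ₁ u) (θ₂ v), hθ₁ u, hθ₂ v] with ω h1 h2 h3
    rw [h1, Pi.add_apply, h2, h3, hinner]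
  have hI : ∫ ω, ‖(inner 𝕜 ((WithLp.equiv 2 (H₁ × H₂)).symm (F₁ ω, F₂ ω)) x : 𝕜)‖ ^ 2 ∂μ =
      ‖θ₁ u + θ₂ v‖ ^ 2 := integral_norm_sq_eq _ _ hsum
  have hpyth : ‖θ₁ u + θ₂ v‖ ^ 2 = ‖θ₁ u‖ ^ 2 + ‖θ₂ v‖ ^ 2 := by
    rw [@norm_add_sq 𝕜, hperp u v]
    simp
  have hI₁ : ‖θ₁ u‖ ^ 2 = ∫ ω, ‖(inner 𝕜 (F₁ ω) u : 𝕜)‖ ^ 2 ∂μ :=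
    (integral_norm_sq_eq _ _ (hθ₁ u)).symm
  have hI₂ : ‖θ₂ v‖ ^ 2 = ∫ ω, ‖(inner 𝕜 (F₂ ω) v : 𝕜)‖ ^ 2 ∂μ :=
    (integral_norm_sq_eq _ _ (hθ₂ v)).symm
  have hItot : ∫ ω, ‖(inner 𝕜 ((WithLp.equiv 2 (H₁ × H₂)).symm (F₁ ω, F₂ ω)) x : 𝕜)‖ ^ 2 ∂μ =
      (∫ ω, ‖(inner 𝕜 (F₁ ω) u : 𝕜)‖ ^ 2 ∂μ) + ∫ ω, ‖(inner 𝕜 (F₂ ω) v : 𝕜)‖ ^ 2 ∂μ := by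
    rw [hI, hpyth, hI₁, hI₂]
  have hadj : ‖ContinuousLinearMap.adjoint (prodOp K₁ K₂) x‖ ^ 2 =
      ‖ContinuousLinearMap.adjoint K₁ u‖ ^ 2 + ‖ContinuousLinearMap.adjoint K₂ v‖ ^ 2 := by
    rw [adjoint_prodOp, WithLp.prod_norm_sq_eq_of_L2, prodOp_apply_fst, prodOp_apply_snd]
  have hx : ‖x‖ ^ 2 = ‖u‖ ^ 2 + ‖v‖ ^ 2 := WithLp.prod_norm_sq_eq_of_L2 x
  obtain ⟨hlo₁, hhi₁⟩ := hframe₁ u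
  obtain ⟨hlo₂, hhi₂⟩ := hframe₂ v
  constructor
  · rw [hItot, hadj]
    have h1 : min A₁ A₂ * ‖ContinuousLinearMap.adjoint K₁ u‖ ^ 2 ≤
        A₁ * ‖ContinuousLinearMap.adjoint K₁ u‖ ^ 2 :=
      mul_le_mul_of_nonneg_right (min_le_left _ _) (sq_nonneg _)
    have h2 : min A₁ A₂ * ‖ContinuousLinearMap.adjoint K₂ v‖ ^ 2 ≤
        A₂ * ‖ContinuousLinearMap.adjoint K₂ v‖ ^ 2 :=
      mul_le_mul_of_nonneg_right (min_le_right _ _) (sq_nonneg _)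
    nlinarith
  · rw [hItot, hx]
    have h1 : B₁ * ‖u‖ ^ 2 ≤ max B₁ B₂ * ‖u‖ ^ 2 :=
      mul_le_mul_of_nonneg_right (le_max_left _ _) (sq_nonneg _)
    have h2 : B₂ * ‖v‖ ^ 2 ≤ max B₁ B₂ * ‖v‖ ^ 2 :=
      mul_le_mul_of_nonneg_right (le_max_right _ _) (sq_nonneg _)
    nlinarith
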